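/- Let V, W be finite-dimensional vector spaces, ρ : W → V linear, and π ∈ V ⊗ Λ^{k−1} W a ρ-compatible k-tensor (ι_{ρ*ξ} ι_η π = −ι_{ρ*η} ι_ξ π for all ξ, η ∈ V*). Then for all ξ ∈ V* and 1 ≤ j ≤ k−1: ι_{ρ*ξ} D_ρ^{j−1} π = D_ρ^j (ι_ξ π) = (1/(j+1)) ι_ξ D_ρ^j π, where D_ρ is the derivation of Λ•(V ⊕ W) with D_ρ(X,u) = (ρ(u),0). -/

import Mathlib

open ExteriorAlgebra

/-- The subspace `(Λ^p V) ⊗ (Λ^q W) ⊆ Λ^{p+q}(V ⊕ W)`. -/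
noncomputable def mixedPiece (V W : Type*) [AddCommGroup V] [Module ℝ V]
    [AddCommGroup W] [Module ℝ W] (p q : ℕ) :
    Submodule ℝ (ExteriorAlgebra ℝ (V × W)) :=
  Submodule.span ℝ { z | ∃ (X : Fin p → V) (u : Fin q → W),
    z = (List.ofFn fun i => ExteriorAlgebra.ι ℝ ((X i, (0 : W)) : V × W)).prod *
        (List.ofFn fun j => ExteriorAlgebra.ι ℝ (((0 : V), u j) : V × W)).prod }

section Aux

variable {V W : Type*} [AddCommGroup V] [Module ℝ V] [AddCommGroup W] [Module ℝ W]

private lemma span_mono_top' :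
    Submodule.span ℝ {z : ExteriorAlgebra ℝ (V × W) |
      ∃ l : List (V × W), z = (l.map (ExteriorAlgebra.ι ℝ)).prod} = ⊤ := by
  set S := Submodule.span ℝ {z : ExteriorAlgebra ℝ (V × W) |
      ∃ l : List (V × W), z = (l.map (ExteriorAlgebra.ι ℝ)).prod} with hS
  have hone : (1 : ExteriorAlgebra ℝ (V × W)) ∈ S :=
    Submodule.subset_span ⟨[], by simp⟩
  have hmul : ∀ a ∈ S, ∀ b ∈ S, a * b ∈ S := by
    intro a ha
    refine Submodule.span_induction (p := fun a _ => ∀ b ∈ S, a * b ∈ S) ?_ ?_ ?_ ?_ ha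
    · rintro x ⟨l, rfl⟩ b hb
      refine Submodule.span_induction
        (p := fun b _ => (l.map (ExteriorAlgebra.ι ℝ)).prod * b ∈ S) ?_ ?_ ?_ ?_ hb
      · rintro y ⟨l', rfl⟩
        exact Submodule.subset_span ⟨l ++ l', by simp⟩
      · simp
      · intro y z _ _ hy hz; rw [mul_add]; exact S.add_mem hy hz
      · intro r y _ hy; rw [mul_smul_comm]; exact S.smul_mem r hy
    · intro b hb; rw [zero_mul]; exact S.zero_mem
    · intro x y _ _ hx hy b hb; rw [add_mul]; exact S.add_mem (hx b hb) (hy b hb)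
    · intro r x _ hx b hb; rw [smul_mul_assoc]; exact S.smul_mem r (hx b hb)
  rw [eq_top_iff]
  rintro x -
  induction x using ExteriorAlgebra.induction with
  | algebraMap r => rw [Algebra.algebraMap_eq_smul_one]; exact S.smul_mem r hone
  | ι m => exact Submodule.subset_span ⟨[m], by simp⟩
  | mul a b ha hb => exact hmul a ha b hb
  | add a b ha hb => exact S.add_mem ha hb

private lemma monomial_span_induction {p : ExteriorAlgebra ℝ (V × W) → Prop}
    (hmono : ∀ l : List (V × W), p ((l.map (ExteriorAlgebra.ι ℝ)).prod))
    (hzero : p 0)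
    (hadd : ∀ x y, p x → p y → p (x + y))
    (hsmul : ∀ (r : ℝ) x, p x → p (r • x)) (x : ExteriorAlgebra ℝ (V × W)) : p x := by
  have hx : x ∈ (⊤ : Submodule ℝ (ExteriorAlgebra ℝ (V × W))) := trivial
  rw [← span_mono_top'] at hx
  refine Submodule.span_induction (p := fun x _ => p x) ?_ hzero
    (fun a b _ _ => hadd a b) (fun r a _ => hsmul r a) hx
  rintro y ⟨l, rfl⟩; exact hmono l

private lemma swap_ι (a b : V × W) :
    ExteriorAlgebra.ι ℝ a * ExteriorAlgebra.ι ℝ b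
      = -(ExteriorAlgebra.ι ℝ b * ExteriorAlgebra.ι ℝ a) :=
  eq_neg_of_add_eq_zero_left (ExteriorAlgebra.ι_add_mul_swap a b)

variable (c : ((V × W) →ₗ[ℝ] ℝ) → Module.End ℝ (ExteriorAlgebra ℝ (V × W)))
    (hcone : ∀ θ, c θ 1 = 0)
    (hcmul : ∀ θ (m : V × W) (x : ExteriorAlgebra ℝ (V × W)),
      c θ (ExteriorAlgebra.ι ℝ m * x) = θ m • x - ExteriorAlgebra.ι ℝ m * c θ x)

include hcone hcmul in
private lemma c_zero' (x : ExteriorAlgebra ℝ (V × W)) : c 0 x = 0 := by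
  induction x using monomial_span_induction with
  | hmono l =>
    induction l with
    | nil => simpa using hcone 0
    | cons m l ih => simp [hcmul, ih]
  | hzero => simp
  | hadd x y hx hy => simp [hx, hy]
  | hsmul r x hx => simp [hx]

include hcone hcmul in
private lemma c_anticomm (θ θ' : (V × W) →ₗ[ℝ] ℝ) (x : ExteriorAlgebra ℝ (V × W)) :
    c θ (c θ' x) = - c θ' (c θ x) := by
  induction x using monomial_span_induction with
  | hmono l =>
    induction l with
    | nil => simp [hcone]
    | cons m l ih =>
      simp only [List.map_cons, List.prod_cons, hcmul, map_sub, map_smul, ih,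
        mul_sub, mul_add, mul_neg, mul_smul_comm]
      module
  | hzero => simp
  | hadd x y hx hy => simp only [map_add, hx, hy]; abel
  | hsmul r x hx => simp [hx]

variable (ρ : W →ₗ[ℝ] V) (D : Module.End ℝ (ExteriorAlgebra ℝ (V × W)))
    (hDder : ∀ a b : ExteriorAlgebra ℝ (V × W), D (a * b) = D a * b + a * D b)
    (hDgen : ∀ (X : V) (u : W),
      D (ExteriorAlgebra.ι ℝ ((X, u) : V × W)) = ExteriorAlgebra.ι ℝ ((ρ u, (0 : W)) : V × W))

include hDder in
private lemma D_one' : D 1 = 0 := by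
  have h := hDder 1 1
  rw [mul_one, one_mul, mul_one] at h
  exact (left_eq_add.mp h)

include hDgen in
private lemma D_gen' (m : V × W) :
    D (ExteriorAlgebra.ι ℝ m)
      = ExteriorAlgebra.ι ℝ ((LinearMap.inl ℝ V W ∘ₗ ρ ∘ₗ LinearMap.snd ℝ V W) m) := by
  simpa using hDgen m.1 m.2

include hcone hcmul hDder hDgen in
private lemma cD_comm (θ : (V × W) →ₗ[ℝ] ℝ) (x : ExteriorAlgebra ℝ (V × W)) :
    c θ (D x) = D (c θ x) + c (θ ∘ₗ (LinearMap.inl ℝ V W ∘ₗ ρ ∘ₗ LinearMap.snd ℝ V W)) x := by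
  set Dv := LinearMap.inl ℝ V W ∘ₗ ρ ∘ₗ LinearMap.snd ℝ V W with hDv
  induction x using monomial_span_induction with
  | hmono l =>
    induction l with
    | nil => simp [D_one' D hDder, hcone]
    | cons m l ih =>
      set P := (l.map (ExteriorAlgebra.ι ℝ)).prod with hP
      simp only [List.map_cons, List.prod_cons]
      rw [hDder, D_gen' ρ D hDgen, map_add, hcmul, hcmul, hcmul, hcmul, map_sub, map_smul, hDder,
        D_gen' ρ D hDgen, ih]
      simp only [hDv, LinearMap.comp_apply, LinearMap.inl_apply, LinearMap.snd_apply,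
        mul_sub, mul_add, mul_neg, mul_smul_comm]
      module
  | hzero => simp
  | hadd x y hx hy => simp only [map_add, hx, hy]; abel
  | hsmul r x hx => simp [hx]

include hcone hcmul hDder hDgen in
private lemma cw_D (ξ : V →ₗ[ℝ] ℝ) (x : ExteriorAlgebra ℝ (V × W)) :
    c (ξ ∘ₗ ρ ∘ₗ LinearMap.snd ℝ V W) (D x) = D (c (ξ ∘ₗ ρ ∘ₗ LinearMap.snd ℝ V W) x) := by
  rw [cD_comm c hcone hcmul ρ D hDder hDgen]
  have h0 : (ξ ∘ₗ ρ ∘ₗ LinearMap.snd ℝ V W) ∘ₗ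
      (LinearMap.inl ℝ V W ∘ₗ ρ ∘ₗ LinearMap.snd ℝ V W) = 0 := by
    ext m <;> simp
  rw [h0, c_zero' c hcone hcmul, add_zero]

include hcone hcmul hDder hDgen in
private lemma cw_pow (ξ : V →ₗ[ℝ] ℝ) (n : ℕ) (x : ExteriorAlgebra ℝ (V × W)) :
    c (ξ ∘ₗ ρ ∘ₗ LinearMap.snd ℝ V W) ((D ^ n) x)
      = (D ^ n) (c (ξ ∘ₗ ρ ∘ₗ LinearMap.snd ℝ V W) x) := by
  induction n generalizing x with
  | zero => simp
  | succ n ih =>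
    rw [pow_succ, Module.End.mul_apply, ih (D x), cw_D c hcone hcmul ρ D hDder hDgen,
      Module.End.mul_apply]

include hcone hcmul hDder hDgen in
private lemma cv_D (ξ : V →ₗ[ℝ] ℝ) (x : ExteriorAlgebra ℝ (V × W)) :
    c (ξ ∘ₗ LinearMap.fst ℝ V W) (D x)
      = D (c (ξ ∘ₗ LinearMap.fst ℝ V W) x) + c (ξ ∘ₗ ρ ∘ₗ LinearMap.snd ℝ V W) x := by
  rw [cD_comm c hcone hcmul ρ D hDder hDgen]
  have h0 : (ξ ∘ₗ LinearMap.fst ℝ V W) ∘ₗ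
      (LinearMap.inl ℝ V W ∘ₗ ρ ∘ₗ LinearMap.snd ℝ V W) = ξ ∘ₗ ρ ∘ₗ LinearMap.snd ℝ V W := by
    ext m <;> simp
  rw [h0]

include hcone hcmul hDder hDgen in
private lemma cv_pow (ξ : V →ₗ[ℝ] ℝ) (n : ℕ) (x : ExteriorAlgebra ℝ (V × W)) :
    c (ξ ∘ₗ LinearMap.fst ℝ V W) ((D ^ (n + 1)) x)
      = (D ^ (n + 1)) (c (ξ ∘ₗ LinearMap.fst ℝ V W) x)
        + ((n : ℝ) + 1) • (D ^ n) (c (ξ ∘ₗ ρ ∘ₗ LinearMap.snd ℝ V W) x) := by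
  induction n generalizing x with
  | zero =>
    simp only [zero_add, pow_one, pow_zero, Module.End.one_apply, Nat.cast_zero, one_smul]
    exact cv_D c hcone hcmul ρ D hDder hDgen ξ x
  | succ n ih =>
    have e1 : ∀ y : ExteriorAlgebra ℝ (V × W), (D ^ (n + 1)) (D y) = (D ^ (n + 1 + 1)) y :=
      fun y => by rw [pow_succ D (n + 1)]; rfl
    have e2 : ∀ y : ExteriorAlgebra ℝ (V × W), (D ^ n) (D y) = (D ^ (n + 1)) y :=
      fun y => by rw [pow_succ D n]; rfl
    rw [← e1 x, ih (D x), cv_D c hcone hcmul ρ D hDder hDgen,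
      cw_D c hcone hcmul ρ D hDder hDgen, map_add, e1, e2]
    push_cast
    module

private noncomputable def MW : Submodule ℝ (ExteriorAlgebra ℝ (V × W)) :=
  Submodule.span ℝ {z | ∃ l : List W,
    z = (l.map (fun u => ExteriorAlgebra.ι ℝ (((0 : V), u) : V × W))).prod}

private noncomputable def NN : Submodule ℝ (ExteriorAlgebra ℝ (V × W)) :=
  Submodule.span ℝ {z | ∃ (X : V) (l : List W),
    z = ExteriorAlgebra.ι ℝ ((X, (0 : W)) : V × W) *
        (l.map (fun u => ExteriorAlgebra.ι ℝ (((0 : V), u) : V × W))).prod}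

private lemma mulVN (X : V) (m : ExteriorAlgebra ℝ (V × W)) (hm : m ∈ MW (V := V) (W := W)) :
    ExteriorAlgebra.ι ℝ ((X, (0 : W)) : V × W) * m ∈ NN (V := V) (W := W) := by
  refine Submodule.span_induction (p := fun m _ =>
    ExteriorAlgebra.ι ℝ ((X, (0 : W)) : V × W) * m ∈ NN (V := V) (W := W)) ?_ ?_ ?_ ?_ hm
  · rintro y ⟨l, rfl⟩
    exact Submodule.subset_span ⟨X, l, rfl⟩
  · simpa using Submodule.zero_mem _
  · intro y z _ _ hy hz; rw [mul_add]; exact Submodule.add_mem _ hy hz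
  · intro r y _ hy; rw [mul_smul_comm]; exact Submodule.smul_mem _ r hy

private lemma mulW_MW (u : W) (m : ExteriorAlgebra ℝ (V × W)) (hm : m ∈ MW (V := V) (W := W)) :
    ExteriorAlgebra.ι ℝ (((0 : V), u) : V × W) * m ∈ MW (V := V) (W := W) := by
  refine Submodule.span_induction (p := fun m _ =>
    ExteriorAlgebra.ι ℝ (((0 : V), u) : V × W) * m ∈ MW (V := V) (W := W)) ?_ ?_ ?_ ?_ hm
  · rintro y ⟨l, rfl⟩
    exact Submodule.subset_span ⟨u :: l, by simp⟩
  · simpa using Submodule.zero_mem _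
  · intro y z _ _ hy hz; rw [mul_add]; exact Submodule.add_mem _ hy hz
  · intro r y _ hy; rw [mul_smul_comm]; exact Submodule.smul_mem _ r hy

private lemma mulW_NN (u : W) (z : ExteriorAlgebra ℝ (V × W)) (hz : z ∈ NN (V := V) (W := W)) :
    ExteriorAlgebra.ι ℝ (((0 : V), u) : V × W) * z ∈ NN (V := V) (W := W) := by
  refine Submodule.span_induction (p := fun z _ =>
    ExteriorAlgebra.ι ℝ (((0 : V), u) : V × W) * z ∈ NN (V := V) (W := W)) ?_ ?_ ?_ ?_ hz
  · rintro y ⟨X, l, rfl⟩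
    rw [← mul_assoc, swap_ι (((0 : V), u) : V × W) ((X, (0 : W)) : V × W), neg_mul, mul_assoc]
    refine Submodule.neg_mem _ (Submodule.subset_span ⟨X, u :: l, by simp⟩)
  · simpa using Submodule.zero_mem _
  · intro y z _ _ hy hz; rw [mul_add]; exact Submodule.add_mem _ hy hz
  · intro r y _ hy; rw [mul_smul_comm]; exact Submodule.smul_mem _ r hy

include hcone hcmul in
private lemma c_MW (θ : (V × W) →ₗ[ℝ] ℝ) (m : ExteriorAlgebra ℝ (V × W))
    (hm : m ∈ MW (V := V) (W := W)) : c θ m ∈ MW (V := V) (W := W) := by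
  refine Submodule.span_induction (p := fun m _ => c θ m ∈ MW (V := V) (W := W)) ?_ ?_ ?_ ?_ hm
  · rintro y ⟨l, rfl⟩
    induction l with
    | nil => simp only [List.map_nil, List.prod_nil, hcone]; exact Submodule.zero_mem _
    | cons v l ih =>
      rw [List.map_cons, List.prod_cons, hcmul]
      exact Submodule.sub_mem _
        (Submodule.smul_mem _ _ (Submodule.subset_span ⟨l, rfl⟩)) (mulW_MW v _ ih)
  · simpa using Submodule.zero_mem _
  · intro y z _ _ hy hz; rw [map_add]; exact Submodule.add_mem _ hy hz
  · intro r y _ hy; rw [map_smul]; exact Submodule.smul_mem _ r hy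

include hcone hcmul in
private lemma c_MW_zero (θ : (V × W) →ₗ[ℝ] ℝ) (hθ : ∀ u : W, θ ((0 : V), u) = 0)
    (m : ExteriorAlgebra ℝ (V × W)) (hm : m ∈ MW (V := V) (W := W)) : c θ m = 0 := by
  refine Submodule.span_induction (p := fun m _ => c θ m = 0) ?_ ?_ ?_ ?_ hm
  · rintro y ⟨l, rfl⟩
    induction l with
    | nil => simpa using hcone θ
    | cons v l ih => rw [List.map_cons, List.prod_cons, hcmul, ih, hθ, zero_smul, mul_zero,
        sub_zero]
  · simp
  · intro y z _ _ hy hz; rw [map_add, hy, hz, add_zero]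
  · intro r y _ hy; rw [map_smul, hy, smul_zero]

include hcone hcmul in
private lemma cv_NN_MW (ξ : V →ₗ[ℝ] ℝ) (z : ExteriorAlgebra ℝ (V × W))
    (hz : z ∈ NN (V := V) (W := W)) :
    c (ξ ∘ₗ LinearMap.fst ℝ V W) z ∈ MW (V := V) (W := W) := by
  refine Submodule.span_induction (p := fun z _ =>
    c (ξ ∘ₗ LinearMap.fst ℝ V W) z ∈ MW (V := V) (W := W)) ?_ ?_ ?_ ?_ hz
  · rintro y ⟨X, l, rfl⟩
    rw [hcmul, c_MW_zero c hcone hcmul _ (by simp) _ (Submodule.subset_span ⟨l, rfl⟩),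
      mul_zero, sub_zero]
    exact Submodule.smul_mem _ _ (Submodule.subset_span ⟨l, rfl⟩)
  · simpa using Submodule.zero_mem _
  · intro y z _ _ hy hz; rw [map_add]; exact Submodule.add_mem _ hy hz
  · intro r y _ hy; rw [map_smul]; exact Submodule.smul_mem _ r hy

include hcone hcmul in
private lemma cw_NN (θ : (V × W) →ₗ[ℝ] ℝ) (hθ : ∀ X : V, θ (X, (0 : W)) = 0)
    (z : ExteriorAlgebra ℝ (V × W)) (hz : z ∈ NN (V := V) (W := W)) :
    c θ z ∈ NN (V := V) (W := W) := by
  refine Submodule.span_induction (p := fun z _ => c θ z ∈ NN (V := V) (W := W)) ?_ ?_ ?_ ?_ hz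
  · rintro y ⟨X, l, rfl⟩
    rw [hcmul, hθ, zero_smul, zero_sub]
    exact Submodule.neg_mem _ (mulVN X _
      (c_MW c hcone hcmul θ _ (Submodule.subset_span ⟨l, rfl⟩)))
  · simpa using Submodule.zero_mem _
  · intro y z _ _ hy hz; rw [map_add]; exact Submodule.add_mem _ hy hz
  · intro r y _ hy; rw [map_smul]; exact Submodule.smul_mem _ r hy

include hDder hDgen in
private lemma D_MW_NN (m : ExteriorAlgebra ℝ (V × W)) (hm : m ∈ MW (V := V) (W := W)) :
    D m ∈ NN (V := V) (W := W) := by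
  refine Submodule.span_induction (p := fun m _ => D m ∈ NN (V := V) (W := W)) ?_ ?_ ?_ ?_ hm
  · rintro y ⟨l, rfl⟩
    induction l with
    | nil =>
      simp only [List.map_nil, List.prod_nil, D_one' D hDder]
      exact Submodule.zero_mem _
    | cons v l ih =>
      rw [List.map_cons, List.prod_cons, hDder, hDgen 0 v]
      exact Submodule.add_mem _ (mulVN (ρ v) _ (Submodule.subset_span ⟨l, rfl⟩))
        (mulW_NN v _ ih)
  · simpa using Submodule.zero_mem _
  · intro y z _ _ hy hz; rw [map_add]; exact Submodule.add_mem _ hy hz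
  · intro r y _ hy; rw [map_smul]; exact Submodule.smul_mem _ r hy

private lemma mixed_le_NN (q : ℕ) : mixedPiece V W 1 q ≤ NN (V := V) (W := W) := by
  rw [mixedPiece, Submodule.span_le]
  rintro z ⟨X, u, rfl⟩
  refine Submodule.subset_span ⟨X 0, List.ofFn u, ?_⟩
  simp [List.ofFn_succ, List.map_ofFn, Function.comp_def]

include hcone hcmul in
private lemma recovery {n : ℕ} (b : Module.Basis (Fin n) ℝ V) (z : ExteriorAlgebra ℝ (V × W))
    (hz : z ∈ NN (V := V) (W := W)) :
    z = ∑ a : Fin n, ExteriorAlgebra.ι ℝ ((b a, (0 : W)) : V × W) *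
      c (b.coord a ∘ₗ LinearMap.fst ℝ V W) z := by
  refine Submodule.span_induction (p := fun z _ =>
    z = ∑ a : Fin n, ExteriorAlgebra.ι ℝ ((b a, (0 : W)) : V × W) *
      c (b.coord a ∘ₗ LinearMap.fst ℝ V W) z) ?_ ?_ ?_ ?_ hz
  · rintro y ⟨X, l, rfl⟩
    set P := (l.map (fun u => ExteriorAlgebra.ι ℝ (((0 : V), u) : V × W))).prod with hP
    have hPmem : P ∈ MW (V := V) (W := W) := Submodule.subset_span ⟨l, rfl⟩
    have hc : ∀ a : Fin n, c (b.coord a ∘ₗ LinearMap.fst ℝ V W)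
        (ExteriorAlgebra.ι ℝ ((X, (0 : W)) : V × W) * P) = b.coord a X • P := by
      intro a
      rw [hcmul, c_MW_zero c hcone hcmul _ (by simp) _ hPmem, mul_zero, sub_zero]
      simp
    rw [Finset.sum_congr rfl fun a _ => by rw [hc a]]
    set f : V →ₗ[ℝ] ExteriorAlgebra ℝ (V × W) :=
      (ExteriorAlgebra.ι ℝ).comp (LinearMap.inl ℝ V W) with hf
    have hfv : ∀ v : V, ExteriorAlgebra.ι ℝ ((v, (0 : W)) : V × W) = f v := by
      intro v; simp [hf]
    calc ExteriorAlgebra.ι ℝ ((X, (0 : W)) : V × W) * P = f X * P := by rw [hfv]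
    _ = (∑ a : Fin n, b.coord a X • f (b a)) * P := by
        congr 1
        rw [show (∑ a : Fin n, b.coord a X • f (b a)) = f (∑ a : Fin n, b.repr X a • b a) by
          simp only [Module.Basis.coord_apply, map_sum, map_smul], b.sum_repr X]
    _ = ∑ a : Fin n, ExteriorAlgebra.ι ℝ ((b a, (0 : W)) : V × W) * (b.coord a X • P) := by
        rw [Finset.sum_mul]
        exact Finset.sum_congr rfl fun a _ => by rw [hfv, smul_mul_assoc, mul_smul_comm]
  · simp
  · intro y z _ _ hy hz
    conv_lhs => rw [hy, hz]
    simp only [map_add, mul_add, Finset.sum_add_distrib]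
  · intro r y _ hy
    conv_lhs => rw [hy]
    simp only [map_smul, mul_smul_comm, Finset.smul_sum]

include hcone hcmul hDder hDgen in
private lemma key_identity [FiniteDimensional ℝ V]
    (π : ExteriorAlgebra ℝ (V × W)) (hπ' : π ∈ NN (V := V) (W := W))
    (hcompat : ∀ ξ η : V →ₗ[ℝ] ℝ,
      c (ξ ∘ₗ ρ ∘ₗ LinearMap.snd ℝ V W) (c (η ∘ₗ LinearMap.fst ℝ V W) π)
        = - c (η ∘ₗ ρ ∘ₗ LinearMap.snd ℝ V W) (c (ξ ∘ₗ LinearMap.fst ℝ V W) π))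
    (ξ : V →ₗ[ℝ] ℝ) :
    c (ξ ∘ₗ ρ ∘ₗ LinearMap.snd ℝ V W) π = D (c (ξ ∘ₗ LinearMap.fst ℝ V W) π) := by
  set z := c (ξ ∘ₗ ρ ∘ₗ LinearMap.snd ℝ V W) π - D (c (ξ ∘ₗ LinearMap.fst ℝ V W) π) with hzdef
  have h1 : c (ξ ∘ₗ LinearMap.fst ℝ V W) π ∈ MW (V := V) (W := W) :=
    cv_NN_MW c hcone hcmul ξ π hπ'
  have hzNN : z ∈ NN (V := V) (W := W) :=
    Submodule.sub_mem _ (cw_NN c hcone hcmul _ (by simp) π hπ')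
      (D_MW_NN ρ D hDder hDgen _ h1)
  have hcz : ∀ η : V →ₗ[ℝ] ℝ, c (η ∘ₗ LinearMap.fst ℝ V W) z = 0 := by
    intro η
    rw [hzdef, map_sub]
    have h2 : c (η ∘ₗ LinearMap.fst ℝ V W) (c (ξ ∘ₗ ρ ∘ₗ LinearMap.snd ℝ V W) π)
        = c (η ∘ₗ ρ ∘ₗ LinearMap.snd ℝ V W) (c (ξ ∘ₗ LinearMap.fst ℝ V W) π) := by
      rw [c_anticomm c hcone hcmul, hcompat ξ η, neg_neg]
    have h3 : c (η ∘ₗ LinearMap.fst ℝ V W) (D (c (ξ ∘ₗ LinearMap.fst ℝ V W) π))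
        = c (η ∘ₗ ρ ∘ₗ LinearMap.snd ℝ V W) (c (ξ ∘ₗ LinearMap.fst ℝ V W) π) := by
      rw [cv_D c hcone hcmul ρ D hDder hDgen η,
        c_MW_zero c hcone hcmul _ (by simp) _ h1, map_zero, zero_add]
    rw [h2, h3, sub_self]
  have hb := recovery c hcone hcmul (Module.finBasis ℝ V) z hzNN
  simp only [hcz, mul_zero, Finset.sum_const_zero] at hb
  exact sub_eq_zero.mp (hzdef.symm.trans hb)

end Aux

/-- for a ρ-compatible k-tensor `π ∈ V ⊗ Λ^{k−1}W` and `1 ≤ j ≤ k−1`: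
`ι_{ρ*ξ} D_ρ^{j−1} π = D_ρ^j (ι_ξ π) = (1/(j+1)) ι_ξ D_ρ^j π`. -/
theorem contraction_Drho_identities (V W : Type*) [AddCommGroup V] [Module ℝ V]
    [AddCommGroup W] [Module ℝ W] [FiniteDimensional ℝ V] [FiniteDimensional ℝ W]
    (ρ : W →ₗ[ℝ] V)
    (D : Module.End ℝ (ExteriorAlgebra ℝ (V × W)))
    (hDder : ∀ a b : ExteriorAlgebra ℝ (V × W), D (a * b) = D a * b + a * D b)
    (hDgen : ∀ (X : V) (u : W),
      D (ExteriorAlgebra.ι ℝ ((X, u) : V × W)) = ExteriorAlgebra.ι ℝ ((ρ u, (0 : W)) : V × W))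
    (c : ((V × W) →ₗ[ℝ] ℝ) → Module.End ℝ (ExteriorAlgebra ℝ (V × W)))
    (hcone : ∀ θ, c θ 1 = 0)
    (hcmul : ∀ θ (m : V × W) (x : ExteriorAlgebra ℝ (V × W)),
      c θ (ExteriorAlgebra.ι ℝ m * x) = θ m • x - ExteriorAlgebra.ι ℝ m * c θ x)
    (k : ℕ) (π : ExteriorAlgebra ℝ (V × W)) (hπ : π ∈ mixedPiece V W 1 (k - 1))
    (hcompat : ∀ ξ η : V →ₗ[ℝ] ℝ,
      c (ξ ∘ₗ ρ ∘ₗ LinearMap.snd ℝ V W) (c (η ∘ₗ LinearMap.fst ℝ V W) π)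
        = - c (η ∘ₗ ρ ∘ₗ LinearMap.snd ℝ V W) (c (ξ ∘ₗ LinearMap.fst ℝ V W) π)) :
    ∀ ξ : V →ₗ[ℝ] ℝ, ∀ j : ℕ, 1 ≤ j → j ≤ k - 1 →
      c (ξ ∘ₗ ρ ∘ₗ LinearMap.snd ℝ V W) ((D ^ (j - 1)) π)
        = (D ^ j) (c (ξ ∘ₗ LinearMap.fst ℝ V W) π) ∧
      ((j + 1 : ℝ))⁻¹ • c (ξ ∘ₗ LinearMap.fst ℝ V W) ((D ^ j) π)
        = (D ^ j) (c (ξ ∘ₗ LinearMap.fst ℝ V W) π) := by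
  intro ξ j hj1 _
  obtain ⟨n, rfl⟩ : ∃ n, j = n + 1 := ⟨j - 1, (Nat.succ_pred_eq_of_pos hj1).symm⟩
  have hπN : π ∈ NN (V := V) (W := W) := mixed_le_NN (k - 1) hπ
  have hkey := key_identity c hcone hcmul ρ D hDder hDgen π hπN hcompat ξ
  have epow : ∀ y : ExteriorAlgebra ℝ (V × W), (D ^ n) (D y) = (D ^ (n + 1)) y :=
    fun y => by rw [pow_succ D n]; rfl
  constructor
  · rw [Nat.add_sub_cancel, cw_pow c hcone hcmul ρ D hDder hDgen, hkey, epow]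
  · rw [cv_pow c hcone hcmul ρ D hDder hDgen, hkey, epow]
    have hsum : (D ^ (n + 1)) (c (ξ ∘ₗ LinearMap.fst ℝ V W) π)
          + ((n : ℝ) + 1) • (D ^ (n + 1)) (c (ξ ∘ₗ LinearMap.fst ℝ V W) π)
        = ((n : ℝ) + 2) • (D ^ (n + 1)) (c (ξ ∘ₗ LinearMap.fst ℝ V W) π) := by
      module
    rw [hsum, smul_smul]
    push_cast
    rw [show ((n : ℝ) + 1 + 1)⁻¹ * ((n : ℝ) + 2) = 1 by
      rw [show ((n : ℝ) + 1 + 1) = ((n : ℝ) + 2) by ring]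
      exact inv_mul_cancel₀ (by positivity), one_smul]
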